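/- (Minimum distance of SRF codes with poles.) Assume L ≥ d_f + d_g − 1. For any two distinct codewords C_1 = Ev^∞(f/g) and C_2 = Ev^∞(f'/g') of the simultaneous rational function code with poles, the error locator polynomial Λ_{C_1,C_2} satisfies deg Λ_{C_1,C_2} ≥ L − d_f − d_g + 2. -/
import Mathlib

open Polynomial

lemma sum_count_le_card {F : Type*} [DecidableEq F] (s : Multiset F) (t : Finset F) :
    ∑ a ∈ t, s.count a ≤ Multiset.card s := by
  classical
  calc ∑ a ∈ t, s.count a = ∑ a ∈ t ∩ s.toFinset, s.count a := by
        refine (Finset.sum_subset Finset.inter_subset_left ?_).symm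
        intro a ha hna
        have : a ∉ s.toFinset := fun h => hna (Finset.mem_inter.2 ⟨ha, h⟩)
        simpa [Multiset.count_eq_zero] using this
    _ ≤ ∑ a ∈ s.toFinset, s.count a :=
        Finset.sum_le_sum_of_subset Finset.inter_subset_right
    _ = Multiset.card s := Multiset.toFinset_sum_count_eq s

/-- Minimum distance of SRF codes with poles: if `L ≥ d_f + d_g − 1`, then for any two distinct
codewords `Ev^∞(f/g)` and `Ev^∞(f'/g')`, the error locator polynomial
`Λ = ∏_j (x − α_j)^{λ_j − μ_j}` (where `μ_j` is the truncated valuation of the error column,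
equal to that of `f'_i g − f_i g'`) satisfies `deg Λ ≥ L − d_f − d_g + 2`. -/
theorem srf_poles_min_dist {F : Type*} [Field F] [Fintype F] [DecidableEq F]
    (n ℓ : ℕ) [NeZero ℓ]
    (α : Fin n → F) (hα : Function.Injective α)
    (lam : Fin n → ℕ) (hlam : ∀ j, 0 < lam j)
    (M : F[X]) (hM : M = ∏ j, (X - C (α j)) ^ lam j)
    (L : ℕ) (hL : L = M.natDegree)
    (df dg : ℕ) (hdf : 0 < df) (hdg : 0 < dg)
    (hLd : (df : ℤ) + dg - 1 ≤ L)
    (f f' : Fin ℓ → F[X]) (g g' : F[X]) (hg : g ≠ 0) (hg' : g' ≠ 0)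
    (hdegf : ∀ i, (f i).degree < (df : ℕ)) (hdegf' : ∀ i, (f' i).degree < (df : ℕ))
    (hdegg : g.degree < (dg : ℕ)) (hdegg' : g'.degree < (dg : ℕ))
    (hred : gcd (Finset.univ.gcd f) g = 1) (hred' : gcd (Finset.univ.gcd f') g' = 1)
    -- the two reduced vectors of fractions are distinct
    (hne : ∃ i, f i * g' ≠ f' i * g)
    -- `μ j` is the truncated valuation of the error column `j`
    (μ : Fin n → ℕ)
    (hμ : ∀ j, μ j = min (lam j) (Finset.univ.inf' Finset.univ_nonempty
        (fun i => if f i * g' - f' i * g = 0 then lam j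
          else rootMultiplicity (α j) (f i * g' - f' i * g))))
    (Λ : F[X]) (hΛ : Λ = ∏ j, (X - C (α j)) ^ (lam j - μ j)) :
    (L : ℤ) - df - dg + 2 ≤ (Λ.natDegree : ℤ) := by
  classical
  obtain ⟨i, hi⟩ := hne
  set h : F[X] := f i * g' - f' i * g with hh
  have hh0 : h ≠ 0 := sub_ne_zero.2 hi
  -- natDegree bounds on the pieces
  have hnf : (f i).natDegree ≤ df - 1 := by
    rcases eq_or_ne (f i) 0 with h0 | h0
    · simp [h0]
    · have := (natDegree_lt_iff_degree_lt h0).2 (by simpa using hdegf i)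
      omega
  have hnf' : (f' i).natDegree ≤ df - 1 := by
    rcases eq_or_ne (f' i) 0 with h0 | h0
    · simp [h0]
    · have := (natDegree_lt_iff_degree_lt h0).2 (by simpa using hdegf' i)
      omega
  have hng : g.natDegree ≤ dg - 1 := by
    have := (natDegree_lt_iff_degree_lt hg).2 (by simpa using hdegg)
    omega
  have hng' : g'.natDegree ≤ dg - 1 := by
    have := (natDegree_lt_iff_degree_lt hg').2 (by simpa using hdegg')
    omega
  have hdegh : h.natDegree ≤ df + dg - 2 := by
    refine le_trans (natDegree_sub_le _ _) ?_
    have h1 : (f i * g').natDegree ≤ df + dg - 2 :=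
      le_trans (natDegree_mul_le) (by omega)
    have h2 : (f' i * g).natDegree ≤ df + dg - 2 :=
      le_trans (natDegree_mul_le) (by omega)
    omega
  -- each μ j is at most the root multiplicity of `h` at `α j`
  have hμle : ∀ j, μ j ≤ rootMultiplicity (α j) h := by
    intro j
    have := Finset.inf'_le (b := i)
      (fun i => if f i * g' - f' i * g = 0 then lam j
          else rootMultiplicity (α j) (f i * g' - f' i * g))
      (Finset.mem_univ i)
    rw [if_neg hh0] at this
    calc μ j ≤ _ := by rw [hμ j]; exact min_le_right _ _
      _ ≤ _ := this
  -- sum of root multiplicities is at most the degree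
  have hsum : ∑ j, μ j ≤ df + dg - 2 := by
    have h1 : ∑ j, μ j ≤ ∑ j, rootMultiplicity (α j) h :=
      Finset.sum_le_sum fun j _ => hμle j
    have h2 : ∑ j, rootMultiplicity (α j) h = ∑ a ∈ Finset.univ.image α, h.roots.count a := by
      rw [Finset.sum_image (fun x _ y _ hxy => hα hxy)]
      simp [count_roots]
    have h3 : ∑ a ∈ Finset.univ.image α, h.roots.count a ≤ Multiset.card h.roots :=
      sum_count_le_card _ _
    have h4 : Multiset.card h.roots ≤ h.natDegree := by
      simpa using card_roots' h
    omega
  have hμlam : ∀ j, μ j ≤ lam j := fun j => by rw [hμ j]; exact min_le_left _ _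
  -- degree computations
  have hdegΛ : Λ.natDegree = ∑ j, (lam j - μ j) := by
    rw [hΛ, natDegree_prod _ _ (fun j _ => pow_ne_zero _ (X_sub_C_ne_zero _))]
    simp [natDegree_pow]
  have hdegM : L = ∑ j, lam j := by
    rw [hL, hM, natDegree_prod _ _ (fun j _ => pow_ne_zero _ (X_sub_C_ne_zero _))]
    simp [natDegree_pow]
  have hsub : ∑ j, (lam j - μ j) = ∑ j, lam j - ∑ j, μ j := by
    rw [eq_comm, Nat.sub_eq_iff_eq_add (Finset.sum_le_sum fun j _ => hμlam j),
      ← Finset.sum_add_distrib]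
    exact Finset.sum_congr rfl fun j _ => (Nat.sub_add_cancel (hμlam j)).symm
  have hμsum_le : ∑ j, μ j ≤ ∑ j, lam j := Finset.sum_le_sum fun j _ => hμlam j
  omega
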